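/- The exponential kernel correlation matrix R on distinct ordered points with entries R_{ij} = exp(−|d_i − d_j|/γ), γ > 0, is positive definite. -/

import Mathlib

open Matrix

/-- Telescoping sum for the increment sequence. -/
lemma telescope_aux (a : ℕ → ℝ) (m : ℕ) :
    ∑ k ∈ Finset.range (m + 1), (a k - (if k = 0 then 0 else a (k - 1))) = a m := by
  induction m with
  | zero => simp
  | succ n ih =>
      rw [Finset.sum_range_succ, ih]
      simp

/-- Truncated sum of increments. -/
lemma trunc_aux (a : ℕ → ℝ) (N m : ℕ) (hm : m < N) :
    ∑ k ∈ Finset.range N, (if k ≤ m then (a k - (if k = 0 then 0 else a (k - 1))) else 0)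
      = a m := by
  rw [← telescope_aux a m]
  rw [← Finset.sum_subset (Finset.range_subset_range.2 hm)]
  · apply Finset.sum_congr rfl
    intro k hk
    rw [Finset.mem_range, Nat.lt_succ_iff] at hk
    simp [hk]
  · intro k _ hk
    rw [Finset.mem_range, Nat.lt_succ_iff] at hk
    simp [hk]

/-- The exponential kernel correlation matrix on distinct ordered points
is positive definite. -/
theorem exp_kernel_posDef
    (N : ℕ) (γ : ℝ) (hγ : 0 < γ)
    (d : ℕ → ℝ) (hd : StrictMono d)
    (R : Matrix (Fin N) (Fin N) ℝ)
    (hR : ∀ i j : Fin N, R i j = Real.exp (-|d i - d j| / γ)) :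
    R.PosDef := by
  -- the auxiliary increasing positive sequence
  set a : ℕ → ℝ := fun n => Real.exp (2 * d n / γ) with ha
  have ha_mono : StrictMono a := by
    intro m n hmn
    apply Real.exp_lt_exp.2
    apply div_lt_div_of_pos_right _ hγ
    have := hd hmn
    linarith
  set c : ℕ → ℝ := fun k => a k - (if k = 0 then 0 else a (k - 1)) with hc
  have hc_pos : ∀ k, 0 < c k := by
    intro k
    cases k with
    | zero => simpa [hc] using Real.exp_pos _
    | succ n =>
        have h := ha_mono (Nat.lt_succ_self n)
        show 0 < a (n + 1) - if n + 1 = 0 then 0 else a (n + 1 - 1)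
        rw [if_neg (Nat.succ_ne_zero n)]
        simpa using h
  -- key kernel factorization
  have hfact : ∀ i j : Fin N,
      Real.exp (-|d i - d j| / γ)
        = Real.exp (-(d i) / γ) * Real.exp (-(d j) / γ) * min (a i) (a j) := by
    intro i j
    rcases le_total (d i) (d j) with h | h
    · have hmin : min (a (i : ℕ)) (a (j : ℕ)) = a i := by
        apply min_eq_left
        apply Real.exp_le_exp.2
        apply div_le_div_of_nonneg_right _ hγ.le <;> linarith
      rw [hmin, ha, ← Real.exp_add, ← Real.exp_add]
      congr 1
      rw [abs_of_nonpos (by linarith)]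
      field_simp
      ring
    · have hmin : min (a (i : ℕ)) (a (j : ℕ)) = a j := by
        apply min_eq_right
        apply Real.exp_le_exp.2
        apply div_le_div_of_nonneg_right _ hγ.le <;> linarith
      rw [hmin, ha, ← Real.exp_add, ← Real.exp_add]
      congr 1
      rw [abs_of_nonneg (by linarith)]
      field_simp
      ring
  -- indicator
  set E : Fin N → Fin N → ℝ := fun k i => if (k : ℕ) ≤ (i : ℕ) then 1 else 0 with hE
  have hmin_rep : ∀ i j : Fin N,
      min (a i) (a j) = ∑ k : Fin N, c k * E k i * E k j := by
    intro i j
    have h1 : ∀ k : Fin N, c k * E k i * E k j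
        = (fun n : ℕ => if n ≤ min (i : ℕ) (j : ℕ) then c n else 0) (k : ℕ) := by
      intro k
      simp only [hE, le_min_iff]
      by_cases h1 : (k : ℕ) ≤ (i : ℕ) <;> by_cases h2 : (k : ℕ) ≤ (j : ℕ) <;>
        simp [h1, h2]
    rw [Finset.sum_congr rfl (fun k _ => h1 k),
      Fin.sum_univ_eq_sum_range (fun n : ℕ => if n ≤ min (i : ℕ) (j : ℕ) then c n else 0) N]
    rw [trunc_aux a N (min (i : ℕ) (j : ℕ)) (lt_of_le_of_lt (min_le_left _ _) i.isLt)]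
    exact (ha_mono.monotone.map_min).symm
  rw [posDef_iff_dotProduct_mulVec]
  constructor
  · -- Hermitian
    ext i j
    simp only [conjTranspose_apply, star_trivial, hR, abs_sub_comm]
  · intro x hx
    set y : Fin N → ℝ := fun i => Real.exp (-(d i) / γ) * x i with hy
    set S : Fin N → ℝ := fun k => ∑ i : Fin N, E k i * y i with hS
    have hquad : star x ⬝ᵥ R *ᵥ x = ∑ k : Fin N, c k * S k ^ 2 := by
      have : star x ⬝ᵥ R *ᵥ x = ∑ i : Fin N, ∑ j : Fin N, x i * (R i j * x j) := by
        simp [dotProduct, mulVec, Finset.mul_sum]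
      rw [this]
      have hterm : ∀ i j : Fin N, x i * (R i j * x j)
          = ∑ k : Fin N, c k * (E k i * y i) * (E k j * y j) := by
        intro i j
        calc x i * (R i j * x j)
            = min (a i) (a j) * (y i * y j) := by
              rw [hR, hfact]; simp only [hy]; ring
          _ = (∑ k : Fin N, c k * E k i * E k j) * (y i * y j) := by rw [hmin_rep]
          _ = ∑ k : Fin N, c k * (E k i * y i) * (E k j * y j) := by
              rw [Finset.sum_mul]
              exact Finset.sum_congr rfl fun k _ => by ring
      calc ∑ i : Fin N, ∑ j : Fin N, x i * (R i j * x j)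
          = ∑ i : Fin N, ∑ j : Fin N, ∑ k : Fin N,
              c k * (E k i * y i) * (E k j * y j) := by
            exact Finset.sum_congr rfl fun i _ => Finset.sum_congr rfl fun j _ => hterm i j
        _ = ∑ i : Fin N, ∑ k : Fin N, ∑ j : Fin N,
              c k * (E k i * y i) * (E k j * y j) := by
            exact Finset.sum_congr rfl fun i _ => Finset.sum_comm
        _ = ∑ k : Fin N, ∑ i : Fin N, ∑ j : Fin N,
              c k * (E k i * y i) * (E k j * y j) := Finset.sum_comm
        _ = ∑ k : Fin N, c k * S k ^ 2 := by
            apply Finset.sum_congr rfl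
            intro k _
            simp only [hS]
            rw [sq, Finset.sum_mul_sum, Finset.mul_sum]
            refine Finset.sum_congr rfl fun i _ => ?_
            rw [Finset.mul_sum]
            exact Finset.sum_congr rfl fun j _ => by ring
    rw [hquad]
    -- find the largest index with y ≠ 0
    have hy_ne : ∃ i, y i ≠ 0 := by
      rw [Function.ne_iff] at hx
      obtain ⟨i, hi⟩ := hx
      exact ⟨i, mul_ne_zero (Real.exp_ne_zero _) hi⟩
    obtain ⟨i0, hi0⟩ := hy_ne
    set T : Finset (Fin N) := Finset.univ.filter (fun i => y i ≠ 0) with hT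
    have hTne : T.Nonempty := ⟨i0, by simp [hT, hi0]⟩
    set k0 : Fin N := T.max' hTne with hk0
    have hk0mem : y k0 ≠ 0 := by
      have := T.max'_mem hTne
      simpa [hT] using this
    have htop : ∀ i : Fin N, k0 < i → y i = 0 := by
      intro i hi
      by_contra h
      have : i ∈ T := by simp [hT, h]
      exact absurd (T.le_max' i this) (not_le.2 hi)
    have hSk0 : S k0 = y k0 := by
      have hSdef : S k0 = ∑ i : Fin N, E k0 i * y i := rfl
      rw [hSdef, Finset.sum_eq_single k0]
      · simp [hE]
      · intro i _ hne
        rcases lt_or_gt_of_ne hne with h | h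
        · simp only [hE]
          rw [if_neg (not_le.2 (Fin.lt_iff_val_lt_val.1 h)), zero_mul]
        · rw [htop i h, mul_zero]
      · intro h
        exact absurd (Finset.mem_univ k0) h
    apply Finset.sum_pos'
    · intro k _
      exact mul_nonneg (hc_pos k).le (sq_nonneg _)
    · refine ⟨k0, Finset.mem_univ k0, ?_⟩
      rw [hSk0]
      have : 0 < y k0 ^ 2 := by positivity
      exact mul_pos (hc_pos k0) this
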